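/- Let G be a topological group and A a compact G-group. Then: (i) the quotient space H¹_cts(G,A)_po is Hausdorff; (ii) Z¹_cts(G,A)_po is compact if and only if H¹_cts(G,A)_po is compact; in particular, if G is a compact Hausdorff space and A is evenly continuous with respect to G, then H¹_cts(G,A)_po is compact. -/

import Mathlib

/-- A set `F` of maps `B → A` is evenly continuous if for each `b ∈ B`, `a ∈ A` and
neighbourhood `U` of `a` there are neighbourhoods `V` of `b` and `W` of `a` such that
every `f ∈ F` with `f b ∈ W` satisfies `f '' V ⊆ U`. -/
def EvenlyContinuousSet {B A : Type} [TopologicalSpace B] [TopologicalSpace A]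
    (F : Set (B → A)) : Prop :=
  ∀ b : B, ∀ a : A, ∀ U ∈ nhds a, ∃ V ∈ nhds b, ∃ W ∈ nhds a,
    ∀ f ∈ F, f b ∈ W → ∀ v ∈ V, f v ∈ U

/-- The space `Z¹_cts(G,A)_po` of continuous 1-cocycles with the point-open
(pointwise convergence) topology. -/
abbrev Z1cts {G A : Type} [Group G] [TopologicalSpace G] [Group A] [TopologicalSpace A]
    (ac : G → A → A) : Type :=
  {a : G → A // Continuous a ∧ ∀ s t : G, a (s * t) = a s * ac s (a t)}

/-- Two continuous cocycles are cohomologous if they are in the same orbit of the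
right `A`-action `(a.x)(s) = x⁻¹ · a(s) · (s • x)`. -/
def Cohomologous {G A : Type} [Group G] [TopologicalSpace G] [Group A] [TopologicalSpace A]
    (ac : G → A → A) (a b : Z1cts ac) : Prop :=
  ∃ x : A, ∀ s : G, b.val s = x⁻¹ * a.val s * ac s x

/-- `H¹_cts(G,A)_po`: the orbit space of `Z¹_cts(G,A)_po` under the action of `A`,
with the quotient topology. -/
abbrev H1cts {G A : Type} [Group G] [TopologicalSpace G] [Group A] [TopologicalSpace A]
    (ac : G → A → A) : Type :=
  Quot (Cohomologous ac)

section Aux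
variable {G A : Type} [Group G] [TopologicalSpace G] [IsTopologicalGroup G]
  [Group A] [TopologicalSpace A] [IsTopologicalGroup A]
  (ac : G → A → A)

set_option linter.unusedSectionVars false in
theorem stmt9_ac_one (hdist : ∀ (s : G) (x y : A), ac s (x * y) = ac s x * ac s y)
    (s : G) : ac s 1 = 1 := by
  have h := hdist s 1 1
  rw [one_mul] at h
  exact (left_eq_mul.mp h)

theorem stmt9_ac_inv (hdist : ∀ (s : G) (x y : A), ac s (x * y) = ac s x * ac s y)
    (s : G) (x : A) : ac s x⁻¹ = (ac s x)⁻¹ := by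
  apply eq_inv_of_mul_eq_one_left
  rw [← hdist, inv_mul_cancel, stmt9_ac_one ac hdist]

/-- The right action of `A` on cocycles. -/
def stmt9_actZ (hac : Continuous fun p : G × A => ac p.1 p.2)
    (hcomp : ∀ (s t : G) (x : A), ac (s * t) x = ac s (ac t x))
    (hdist : ∀ (s : G) (x y : A), ac s (x * y) = ac s x * ac s y)
    (x : A) (a : Z1cts ac) : Z1cts ac :=
  ⟨fun s => x⁻¹ * a.val s * ac s x, by
    constructor
    · exact (continuous_const.mul a.2.1).mul
        (hac.comp (continuous_id.prodMk continuous_const))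
    · intro s t
      simp only []
      rw [a.2.2 s t, hcomp, hdist, hdist, stmt9_ac_inv ac hdist]
      group⟩

end Aux

section Aux2
variable {G A : Type} [Group G] [TopologicalSpace G] [IsTopologicalGroup G]
  [Group A] [TopologicalSpace A] [IsTopologicalGroup A]
  (ac : G → A → A)
  (hac : Continuous fun p : G × A => ac p.1 p.2)
  (hcomp : ∀ (s t : G) (x : A), ac (s * t) x = ac s (ac t x))
  (hdist : ∀ (s : G) (x y : A), ac s (x * y) = ac s x * ac s y)

set_option linter.unusedSectionVars false
include hac hcomp hdist

theorem stmt9_actZ_val (x : A) (a : Z1cts ac) (s : G) :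
    (stmt9_actZ ac hac hcomp hdist x a).val s = x⁻¹ * a.val s * ac s x := rfl

theorem stmt9_actZ_one (a : Z1cts ac) : stmt9_actZ ac hac hcomp hdist 1 a = a := by
  apply Subtype.ext
  funext s
  simp [stmt9_actZ_val, stmt9_ac_one ac hdist]

theorem stmt9_actZ_mul (x y : A) (a : Z1cts ac) :
    stmt9_actZ ac hac hcomp hdist y (stmt9_actZ ac hac hcomp hdist x a) =
      stmt9_actZ ac hac hcomp hdist (x * y) a := by
  apply Subtype.ext
  funext s
  simp [stmt9_actZ_val, hdist, mul_assoc]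

theorem stmt9_actZ_continuous (x : A) :
    Continuous (stmt9_actZ ac hac hcomp hdist x) := by
  apply Continuous.subtype_mk
  apply continuous_pi
  intro s
  exact (continuous_const.mul ((continuous_apply s).comp continuous_subtype_val)).mul
    continuous_const

/-- The shear homeomorphism on `Z1cts ac × A`. -/
def stmt9_shear : (Z1cts ac × A) ≃ₜ (Z1cts ac × A) where
  toFun p := (stmt9_actZ ac hac hcomp hdist p.2 p.1, p.2)
  invFun p := (stmt9_actZ ac hac hcomp hdist p.2⁻¹ p.1, p.2)
  left_inv p := by
    simp [stmt9_actZ_mul, stmt9_actZ_one ac hac hcomp hdist]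
  right_inv p := by
    simp [stmt9_actZ_mul, stmt9_actZ_one ac hac hcomp hdist]
  continuous_toFun := by
    refine Continuous.prodMk ?_ continuous_snd
    apply Continuous.subtype_mk
    apply continuous_pi
    intro s
    exact (continuous_snd.inv.mul
      (((continuous_apply s).comp continuous_subtype_val).comp continuous_fst)).mul
      (hac.comp (continuous_const.prodMk continuous_snd))
  continuous_invFun := by
    refine Continuous.prodMk ?_ continuous_snd
    apply Continuous.subtype_mk
    apply continuous_pi
    intro s
    exact (continuous_snd.inv.inv.mul
      (((continuous_apply s).comp continuous_subtype_val).comp continuous_fst)).mul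
      (hac.comp (continuous_const.prodMk continuous_snd.inv))

theorem stmt9_cohomologous_iff (a b : Z1cts ac) :
    Cohomologous ac a b ↔ ∃ x : A, b = stmt9_actZ ac hac hcomp hdist x a := by
  constructor
  · rintro ⟨x, h⟩
    exact ⟨x, Subtype.ext (funext h)⟩
  · rintro ⟨x, rfl⟩
    exact ⟨x, fun s => rfl⟩

theorem stmt9_equiv : Equivalence (Cohomologous ac) := by
  constructor
  · intro a
    exact ⟨1, fun s => by simp [stmt9_ac_one ac hdist]⟩
  · rintro a b ⟨x, h⟩
    refine ⟨x⁻¹, fun s => ?_⟩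
    rw [h s, stmt9_ac_inv ac hdist]
    group
  · rintro a b c ⟨x, h⟩ ⟨y, h'⟩
    refine ⟨x * y, fun s => ?_⟩
    rw [h' s, h s, hdist s x y, mul_inv_rev]
    group

end Aux2

section Aux3
variable {G A : Type} [Group G] [TopologicalSpace G] [IsTopologicalGroup G]
  [Group A] [TopologicalSpace A] [IsTopologicalGroup A]
  (ac : G → A → A)
  (hac : Continuous fun p : G × A => ac p.1 p.2)
  (hcomp : ∀ (s t : G) (x : A), ac (s * t) x = ac s (ac t x))
  (hdist : ∀ (s : G) (x y : A), ac s (x * y) = ac s x * ac s y)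

set_option linter.unusedSectionVars false
include hac hcomp hdist

theorem stmt9_mk_eq_iff (a b : Z1cts ac) :
    Quot.mk (Cohomologous ac) a = Quot.mk (Cohomologous ac) b ↔ Cohomologous ac a b := by
  rw [Quot.eq, (stmt9_equiv ac hac hcomp hdist).eqvGen_iff]

theorem stmt9_sat (S : Set (Z1cts ac)) :
    (Quot.mk (Cohomologous ac)) ⁻¹' ((Quot.mk (Cohomologous ac)) '' S) =
      Prod.fst '' ((stmt9_shear ac hac hcomp hdist) '' (S ×ˢ (Set.univ : Set A))) := by
  rw [Set.image_image]
  ext b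
  simp only [Set.mem_preimage, Set.mem_image, Set.mem_prod, Set.mem_univ, and_true]
  constructor
  · rintro ⟨a, haS, hq⟩
    obtain ⟨x, rfl⟩ := (stmt9_cohomologous_iff ac hac hcomp hdist a b).mp
      ((stmt9_mk_eq_iff ac hac hcomp hdist a b).mp hq)
    exact ⟨(a, x), haS, rfl⟩
  · rintro ⟨⟨a, x⟩, haS, rfl⟩
    refine ⟨a, haS, (stmt9_mk_eq_iff ac hac hcomp hdist _ _).mpr ?_⟩
    exact (stmt9_cohomologous_iff ac hac hcomp hdist _ _).mpr ⟨x, rfl⟩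

theorem stmt9_isOpenMap : IsOpenMap (Quot.mk (Cohomologous ac)) := by
  intro U hU
  rw [← isQuotientMap_quot_mk.isOpen_preimage, stmt9_sat ac hac hcomp hdist]
  exact isOpenMap_fst _ ((stmt9_shear ac hac hcomp hdist).isOpenMap _
    (hU.prod isOpen_univ))

theorem stmt9_isClosedMap [CompactSpace A] :
    IsClosedMap (Quot.mk (Cohomologous ac)) := by
  intro C hC
  rw [← isQuotientMap_quot_mk.isClosed_preimage, stmt9_sat ac hac hcomp hdist]
  exact isClosedMap_fst_of_compactSpace _
    ((stmt9_shear ac hac hcomp hdist).isClosedMap _ (hC.prod isClosed_univ))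

theorem stmt9_rel_closed [T2Space A] [CompactSpace A] :
    IsClosed {p : Z1cts ac × Z1cts ac | Cohomologous ac p.1 p.2} := by
  have hK : IsClosed {q : (Z1cts ac × Z1cts ac) × A |
      ∀ s : G, q.1.2.val s = q.2⁻¹ * q.1.1.val s * ac s q.2} := by
    have : {q : (Z1cts ac × Z1cts ac) × A |
        ∀ s : G, q.1.2.val s = q.2⁻¹ * q.1.1.val s * ac s q.2} =
        ⋂ s : G, {q : (Z1cts ac × Z1cts ac) × A |
          q.1.2.val s = q.2⁻¹ * q.1.1.val s * ac s q.2} := by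
      ext q; simp [Set.mem_iInter]
    rw [this]
    refine isClosed_iInter fun s => isClosed_eq ?_ ?_
    · exact ((continuous_apply s).comp continuous_subtype_val).comp
        (continuous_snd.comp continuous_fst)
    · exact (continuous_snd.inv.mul (((continuous_apply s).comp
        continuous_subtype_val).comp (continuous_fst.comp continuous_fst))).mul
        (hac.comp (continuous_const.prodMk continuous_snd))
  have : {p : Z1cts ac × Z1cts ac | Cohomologous ac p.1 p.2} =
      Prod.fst '' {q : (Z1cts ac × Z1cts ac) × A |
        ∀ s : G, q.1.2.val s = q.2⁻¹ * q.1.1.val s * ac s q.2} := by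
    ext ⟨a, b⟩
    simp only [Set.mem_setOf_eq, Set.mem_image]
    constructor
    · rintro ⟨x, h⟩
      exact ⟨((a, b), x), h, rfl⟩
    · rintro ⟨⟨⟨a', b'⟩, x⟩, h, hp⟩
      cases hp
      exact ⟨x, h⟩
  rw [this]
  exact isClosedMap_fst_of_compactSpace _ hK

theorem stmt9_fiber_compact [CompactSpace A] (y : H1cts ac) :
    IsCompact ((Quot.mk (Cohomologous ac)) ⁻¹' {y}) := by
  induction y using Quot.ind with
  | _ a =>
    have : (Quot.mk (Cohomologous ac)) ⁻¹' {Quot.mk (Cohomologous ac) a} =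
        Set.range (fun x : A => stmt9_actZ ac hac hcomp hdist x a) := by
      ext b
      simp only [Set.mem_preimage, Set.mem_singleton_iff, Set.mem_range]
      rw [stmt9_mk_eq_iff ac hac hcomp hdist, stmt9_cohomologous_iff ac hac hcomp hdist]
      constructor
      · rintro ⟨x, ha⟩
        refine ⟨x⁻¹, ?_⟩
        rw [ha, stmt9_actZ_mul, mul_inv_cancel, stmt9_actZ_one ac hac hcomp hdist]
      · rintro ⟨x, rfl⟩
        exact ⟨x⁻¹, by
          rw [stmt9_actZ_mul, mul_inv_cancel, stmt9_actZ_one ac hac hcomp hdist]⟩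
    rw [this]
    apply isCompact_range
    apply Continuous.subtype_mk
    apply continuous_pi
    intro s
    exact (continuous_inv.mul continuous_const).mul
      (hac.comp (continuous_const.prodMk continuous_id))
end Aux3

section Aux4
variable {G A : Type} [Group G] [TopologicalSpace G] [IsTopologicalGroup G]
  [Group A] [TopologicalSpace A] [IsTopologicalGroup A]
  (ac : G → A → A)
  (hac : Continuous fun p : G × A => ac p.1 p.2)

set_option linter.unusedSectionVars false
include hac

theorem stmt9_closed_Z1 [T2Space A] [CompactSpace A]
    (hec : EvenlyContinuousSet {f : G → A | Continuous f}) :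
    IsClosed {a : G → A | Continuous a ∧ ∀ s t : G, a (s * t) = a s * ac s (a t)} := by
  set S : Set (G → A) :=
    {a : G → A | Continuous a ∧ ∀ s t : G, a (s * t) = a s * ac s (a t)} with hS
  apply isClosed_of_closure_subset
  intro f hf
  have hT : IsClosed {a : G → A | ∀ s t : G, a (s * t) = a s * ac s (a t)} := by
    have : {a : G → A | ∀ s t : G, a (s * t) = a s * ac s (a t)} =
        ⋂ s : G, ⋂ t : G, {a : G → A | a (s * t) = a s * ac s (a t)} := by
      ext a; simp [Set.mem_iInter]
    rw [this]
    refine isClosed_iInter fun s => isClosed_iInter fun t => isClosed_eq ?_ ?_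
    · exact continuous_apply (s * t)
    · exact (continuous_apply s).mul
        (hac.comp (continuous_const.prodMk (continuous_apply t)))
  have hcocycle : ∀ s t : G, f (s * t) = f s * ac s (f t) :=
    closure_minimal (fun a ha => ha.2) hT hf
  haveI hl : (nhds f ⊓ Filter.principal S).NeBot := mem_closure_iff_clusterPt.mp hf
  refine ⟨?_, hcocycle⟩
  rw [continuous_iff_continuousAt]
  intro s
  rw [ContinuousAt, (closed_nhds_basis (f s)).tendsto_right_iff]
  rintro U ⟨hU, hUc⟩
  obtain ⟨V, hV, W, hW, H⟩ := hec s (f s) U hU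
  have key : ∀ v ∈ V, f v ∈ U := by
    intro v hv
    have t1 : Filter.Tendsto (fun g : G → A => g v)
        (nhds f ⊓ Filter.principal S) (nhds (f v)) :=
      ((continuous_apply v).tendsto f).mono_left inf_le_left
    have e1 : ∀ᶠ g in nhds f ⊓ Filter.principal S, g s ∈ W :=
      Filter.Eventually.filter_mono inf_le_left
        (((continuous_apply s).tendsto f).eventually_mem hW)
    have e2 : ∀ᶠ g in nhds f ⊓ Filter.principal S, g ∈ S :=
      Filter.eventually_inf_principal.mpr (Filter.Eventually.of_forall fun g hg => hg)
    have e3 : ∀ᶠ g in nhds f ⊓ Filter.principal S, g v ∈ U :=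
      (e1.and e2).mono fun g hg => H g hg.2.1 hg.1 v hv
    exact hUc.mem_of_tendsto t1 e3
  exact Filter.eventually_iff_exists_mem.mpr ⟨V, hV, key⟩

end Aux4


/-- For a compact `G`-group `A`: (i) `H¹_cts(G,A)_po` is Hausdorff;
(ii) `Z¹_cts(G,A)_po` is compact iff `H¹_cts(G,A)_po` is compact; in particular if `G`
is compact Hausdorff and `A` is evenly continuous with respect to `G`, then
`H¹_cts(G,A)_po` is compact. -/
theorem stmt_9
    {G : Type} [Group G] [TopologicalSpace G] [IsTopologicalGroup G]
    {A : Type} [Group A] [TopologicalSpace A] [IsTopologicalGroup A] [T2Space A]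
    [CompactSpace A]
    (ac : G → A → A)
    (hac : Continuous fun p : G × A => ac p.1 p.2)
    (hone : ∀ x : A, ac 1 x = x)
    (hcomp : ∀ (s t : G) (x : A), ac (s * t) x = ac s (ac t x))
    (hdist : ∀ (s : G) (x y : A), ac s (x * y) = ac s x * ac s y) :
    T2Space (H1cts ac) ∧
    (CompactSpace (Z1cts ac) ↔ CompactSpace (H1cts ac)) ∧
    (CompactSpace G → T2Space G → EvenlyContinuousSet {f : G → A | Continuous f} →
      CompactSpace (H1cts ac)) := by
  have hT2 : T2Space (H1cts ac) := by
    refine { t2 := fun p q => ?_ }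
    induction p using Quot.ind with | _ a =>
    induction q using Quot.ind with | _ b =>
    intro hne
    have hab : (a, b) ∈ {p : Z1cts ac × Z1cts ac | Cohomologous ac p.1 p.2}ᶜ :=
      fun h => hne (Quot.sound h)
    obtain ⟨u, v, hu, hv, hau, hbv, huv⟩ :=
      isOpen_prod_iff.mp (stmt9_rel_closed ac hac hcomp hdist).isOpen_compl a b hab
    refine ⟨Quot.mk _ '' u, Quot.mk _ '' v, stmt9_isOpenMap ac hac hcomp hdist u hu,
      stmt9_isOpenMap ac hac hcomp hdist v hv, ⟨a, hau, rfl⟩, ⟨b, hbv, rfl⟩, ?_⟩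
    rw [Set.disjoint_left]
    rintro z ⟨a', ha', rfl⟩ ⟨b', hb', hq⟩
    exact huv (Set.mk_mem_prod ha' hb')
      ((stmt9_mk_eq_iff ac hac hcomp hdist a' b').mp hq.symm)
  have hfwd : CompactSpace (Z1cts ac) → CompactSpace (H1cts ac) := by
    intro h
    refine ⟨?_⟩
    rw [← (Quot.mk_surjective (r := Cohomologous ac)).range_eq]
    exact isCompact_range continuous_quot_mk
  have hbwd : CompactSpace (H1cts ac) → CompactSpace (Z1cts ac) := by
    intro h
    have hp : IsProperMap (Quot.mk (Cohomologous ac)) :=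
      isProperMap_iff_isClosedMap_and_compact_fibers.mpr
        ⟨continuous_quot_mk, stmt9_isClosedMap ac hac hcomp hdist,
          stmt9_fiber_compact ac hac hcomp hdist⟩
    exact ⟨by simpa using hp.isCompact_preimage isCompact_univ⟩
  refine ⟨hT2, ⟨hfwd, hbwd⟩, ?_⟩
  intro _ _ hec
  apply hfwd
  exact isCompact_iff_compactSpace.mp (stmt9_closed_Z1 ac hac hec).isCompact
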